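/- Let n ≥ 1, α ∈ (0,1), and let a_1,…,a_n, r_1,…,r_n, and y be real numbers with r_i ≥ 0. If y ∉ [ q⁻_{α,n}{a_i − r_i}, q⁺_{α,n}{a_i + r_i} ], then Σ_{i=1}^{n} 1[ |y − a_i| > r_i ] ≥ (1−α)(n+1). In particular, applied with a_i = μ̂_{φ∖i}(X_{n+1}), r_i = R_i = |Y_i − μ̂_{φ∖i}(X_i)|, and y = Y_{n+1}: if Y_{n+1} ∉ Ĉ^{J+aB}_{α,n,B}(X_{n+1}), then Σ_{i=1}^{n} 1[ |Y_{n+1} − μ̂_{φ∖i}(X_{n+1})| > R_i ] ≥ (1−α)(n+1). -/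

import Mathlib

open MeasureTheory ProbabilityTheory Finset
open scoped ENNReal

noncomputable section

namespace JaB

/-- The `k`-th smallest entry of a list of real numbers, viewed in the extended reals;
equal to `⊤` when `k` exceeds the length of the list. -/
def kthSmallest (l : List ℝ) (k : ℕ) : EReal :=
  ((List.insertionSort (· ≤ ·) l).map (fun x : ℝ => (x : EReal))).getD (k - 1) ⊤

/-- Upper `α`-quantile `q⁺_{α,n}` of the `n` values `v 0, …, v (n-1)`: the
`⌈(1-α)(n+1)⌉`-th smallest value (`⊤` if `⌈(1-α)(n+1)⌉ > n`). -/
def qPlus {n : ℕ} (α : ℝ) (v : Fin n → ℝ) : EReal :=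
  kthSmallest (List.ofFn v) ⌈(1 - α) * ((n : ℝ) + 1)⌉₊

/-- Lower `α`-quantile `q⁻_{α,n}{v i} = -q⁺_{α,n}{-v i}`. -/
def qMinus {n : ℕ} (α : ℝ) (v : Fin n → ℝ) : EReal :=
  - qPlus α (fun i => - v i)

/-- Membership of `y` in the `ε`-inflated jackknife+-type interval
`[q⁻_{α,n}{muLOO i - R i} - ε, q⁺_{α,n}{muLOO i + R i} + ε]`. -/
def memJp {n : ℕ} (α : ℝ) (muLOO R : Fin n → ℝ) (ε : ℝ) (y : ℝ) : Prop :=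
  qMinus α (fun i => muLOO i - R i) - (ε : EReal) ≤ (y : EReal) ∧
    (y : EReal) ≤ qPlus α (fun i => muLOO i + R i) + (ε : EReal)

/-- A base regression algorithm: it maps a finite sequence of data points in
`ℝ^p × ℝ` to a regression function `ℝ^p → ℝ`. -/
abbrev RegAlg (p : ℕ) := List ((Fin p → ℝ) × ℝ) → (Fin p → ℝ) → ℝ

/-- A regression algorithm is symmetric if it is invariant under permutation
of its input data points. -/
def SymmAlg {p : ℕ} (Alg : RegAlg p) : Prop :=
  ∀ l l' : List ((Fin p → ℝ) × ℝ), l.Perm l' → Alg l = Alg l'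

/-- An aggregation function is symmetric if it is invariant under permutation
of its arguments. -/
def SymmAgg (agg : List ℝ → ℝ) : Prop :=
  ∀ l l' : List ℝ, l.Perm l' → agg l = agg l'

/-- The model fitted by `Alg` on the resample `s` (an `m`-tuple of indices,
allowing repeats) of the data `z`. -/
def fit {p : ℕ} (Alg : RegAlg p) {N m : ℕ} (z : Fin N → (Fin p → ℝ) × ℝ)
    (s : Fin m → Fin N) : (Fin p → ℝ) → ℝ :=
  Alg (List.ofFn fun j => z (s j))

/-- The leave-one-out ensemble model `μ̂_{φ∖i}` built from the first `Bc` resamples of an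
infinite sequence `S` of resamples: aggregate (via `agg`) the models fitted on those
resamples `S b`, `b < Bc`, that avoid the index `i`. -/
def looEns {p : ℕ} (Alg : RegAlg p) (agg : List ℝ → ℝ) {N m : ℕ}
    (z : Fin N → (Fin p → ℝ) × ℝ) (Bc : ℕ) (S : ℕ → Fin m → Fin N) (i : Fin N)
    (x : Fin p → ℝ) : ℝ :=
  agg ((((List.range Bc).filter fun b => decide (∀ k, S b k ≠ i))).map
    fun b => fit Alg z (S b) x)

/-- The leave-one-out ensemble model `μ̂_{φ∖i}` built from `B` resamples (fixed `B`). -/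
def looEnsF {p : ℕ} (Alg : RegAlg p) (agg : List ℝ → ℝ) {N m B : ℕ}
    (z : Fin N → (Fin p → ℝ) × ℝ) (s : Fin B → Fin m → Fin N) (i : Fin N)
    (x : Fin p → ℝ) : ℝ :=
  agg ((((List.finRange B).filter fun b => decide (∀ k, s b k ≠ i))).map
    fun b => fit Alg z (s b) x)

/-- The leave-two-out ensemble model `μ̃_{φ∖i,j}` built from `B` resamples. -/
def ltoEnsF {p : ℕ} (Alg : RegAlg p) (agg : List ℝ → ℝ) {N m B : ℕ}
    (z : Fin N → (Fin p → ℝ) × ℝ) (s : Fin B → Fin m → Fin N) (i j : Fin N)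
    (x : Fin p → ℝ) : ℝ :=
  agg ((((List.finRange B).filter fun b =>
      decide ((∀ k, s b k ≠ i) ∧ (∀ k, s b k ≠ j)))).map
    fun b => fit Alg z (s b) x)

/-- The full ensemble model `μ̂_φ` built from all `B` resamples. -/
def fullEnsF {p : ℕ} (Alg : RegAlg p) (agg : List ℝ → ℝ) {N m B : ℕ}
    (z : Fin N → (Fin p → ℝ) × ℝ) (s : Fin B → Fin m → Fin N)
    (x : Fin p → ℝ) : ℝ :=
  agg ((List.finRange B).map fun b => fit Alg z (s b) x)

/-- The model fitted by `Alg` on the data points indexed by a subset `s`. -/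
def fitSub {p : ℕ} (Alg : RegAlg p) {N : ℕ} (z : Fin N → (Fin p → ℝ) × ℝ)
    (s : Finset (Fin N)) : (Fin p → ℝ) → ℝ :=
  Alg ((s.sort (· ≤ ·)).map z)

/-- The leave-one-out ensemble model `μ̂_{φ∖i}` for subset (without replacement)
resampling, from the first `Bc` resamples of an infinite sequence `S`. -/
def looEnsSub {p : ℕ} (Alg : RegAlg p) (agg : List ℝ → ℝ) {N : ℕ}
    (z : Fin N → (Fin p → ℝ) × ℝ) (Bc : ℕ) (S : ℕ → Finset (Fin N)) (i : Fin N)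
    (x : Fin p → ℝ) : ℝ :=
  agg ((((List.range Bc).filter fun b => decide (i ∉ S b))).map
    fun b => fitSub Alg z (S b) x)

/-- The value at `k` of the Binomial(`N`, `θ`) probability mass function, as an
extended nonnegative real. -/
def binomPMF (N : ℕ) (θ : ℝ) (k : ℕ) : ℝ≥0∞ :=
  ENNReal.ofReal ((N.choose k : ℝ) * θ ^ k * (1 - θ) ^ (N - k))

/-- Arithmetic-mean aggregation (with default value `0` on the empty collection). -/
def meanAgg : List ℝ → ℝ := fun l => l.sum / l.length

/-- The permutation matrix `Π_σ` of a permutation `σ`, with entries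
`(Π_σ)_{σ(i), i} = 1` and zeros elsewhere. -/
def permMatrix {k : ℕ} (σ : Equiv.Perm (Fin k)) : Matrix (Fin k) (Fin k) ℝ :=
  Matrix.of fun a b => if a = σ b then 1 else 0

/-- The tournament matrix `A(R)` of a matrix `R`:
`A_{ij} = 1[R_{ij} > R_{ji}]` off the diagonal, `A_{ii} = 0`. -/
def tournament {k : ℕ} (R : Matrix (Fin k) (Fin k) ℝ) : Matrix (Fin k) (Fin k) ℝ :=
  Matrix.of fun i j => if i ≠ j ∧ R j i < R i j then 1 else 0

instance instMeasFinset (k : ℕ) : MeasurableSpace (Finset (Fin k)) := ⊤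

end JaB

open JaB


section Aux

lemma countP_ofFn' {n : ℕ} (v : Fin n → ℝ) (p : ℝ → Prop) [DecidablePred p] :
    (List.ofFn v).countP (fun x => decide (p x)) = (univ.filter fun i => p (v i)).card := by
  calc (List.ofFn v).countP (fun x => decide (p x))
      = Multiset.countP p ((List.ofFn v : List ℝ) : Multiset ℝ) :=
        (Multiset.coe_countP _ _).symm
    _ = Multiset.countP p (Multiset.map v univ.val) := by rw [Fin.univ_val_map]
    _ = Multiset.card (Multiset.filter (fun i => p (v i)) univ.val) :=
        Multiset.countP_map _ _ _
    _ = (univ.filter fun i => p (v i)).card := by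
        rw [Finset.card, Finset.filter_val]

lemma kth_lt_count' {n k : ℕ} (v : Fin n → ℝ) (w : ℝ)
    (h : kthSmallest (List.ofFn v) k < (w : EReal)) :
    k ≤ (univ.filter fun i => v i < w).card := by
  rcases Nat.eq_zero_or_pos k with hk | hk
  · simp [hk]
  set s := List.insertionSort (· ≤ ·) (List.ofFn v) with hs
  have hlen : s.length = n := by
    rw [hs, List.length_insertionSort, List.length_ofFn]
  have hkn : k - 1 < n := by
    by_contra hcon
    push_neg at hcon
    have : kthSmallest (List.ofFn v) k = ⊤ := by
      rw [kthSmallest, List.getD_eq_default]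
      rw [List.length_map, hlen]; exact hcon
    rw [this] at h
    exact absurd h (by simp)
  have hk1 : k - 1 < s.length := by rw [hlen]; exact hkn
  have hval : kthSmallest (List.ofFn v) k = ((s.get ⟨k-1, hk1⟩ : ℝ) : EReal) := by
    rw [kthSmallest, List.getD_eq_getElem _ _ (by rw [List.length_map]; exact hk1)]
    simp
    rfl
  rw [hval, EReal.coe_lt_coe_iff] at h
  have hsorted : s.Pairwise (· ≤ ·) := List.pairwise_insertionSort _ _
  have hcount : k ≤ s.countP (fun x => decide (x < w)) := by
    have htake : ∀ x ∈ s.take k, x < w := by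
      intro x hx
      rw [List.mem_take_iff_getElem] at hx
      obtain ⟨j, hj, rfl⟩ := hx
      have hjk : j ≤ k - 1 := Nat.le_sub_one_of_lt (lt_of_lt_of_le hj (min_le_left _ _))
      have hjlen : j < s.length := lt_of_lt_of_le hj (min_le_right _ _)
      calc s[j] ≤ s.get ⟨k-1, hk1⟩ := hsorted.rel_get_of_le (by exact hjk)
        _ < w := h
    calc k = (s.take k).length := by
            rw [List.length_take, hlen]; omega
      _ = (s.take k).countP (fun x => decide (x < w)) := by
            rw [List.countP_eq_length_filter, List.filter_eq_self.2 (by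
              intro x hx; exact decide_eq_true (htake x hx))]
      _ ≤ s.countP (fun x => decide (x < w)) := by
            conv_rhs => rw [← List.take_append_drop k s]
            rw [List.countP_append]; omega
  calc k ≤ s.countP (fun x => decide (x < w)) := hcount
    _ = (List.ofFn v).countP (fun x => decide (x < w)) :=
        (List.perm_insertionSort _ _).countP_eq _
    _ = (univ.filter fun i => v i < w).card := by
        rw [countP_ofFn' v (· < w)]

end Aux

/-- if y falls outside the jackknife+-type interval, then at least
(1-α)(n+1) of the residual comparisons must fail. -/
theorem outside_interval_many_large_residuals
    (n : ℕ) (hn : 1 ≤ n) (α : ℝ) (hα : α ∈ Set.Ioo (0 : ℝ) 1)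
    (a r : Fin n → ℝ) (hr : ∀ i, 0 ≤ r i) (y : ℝ)
    (hout : ¬ memJp α a r 0 y) :
    (1 - α) * ((n : ℝ) + 1) ≤
      ((univ.filter fun i : Fin n => r i < |y - a i|).card : ℝ) := by
  set k := ⌈(1 - α) * ((n : ℝ) + 1)⌉₊ with hk
  simp only [memJp, EReal.coe_zero, sub_zero, add_zero, not_and_or, not_le] at hout
  have hmain : k ≤ (univ.filter fun i : Fin n => r i < |y - a i|).card := by
    rcases hout with h | h
    · rw [qMinus] at h
      have hQ : qPlus α (fun i => -(a i - r i)) < ((-y : ℝ) : EReal) := by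
        rw [EReal.coe_neg]
        exact EReal.lt_neg_of_lt_neg h
      have := kth_lt_count' (fun i => -(a i - r i)) (-y) hQ
      refine le_trans this (Finset.card_le_card ?_)
      intro i hi
      simp only [Finset.mem_filter, Finset.mem_univ, true_and] at hi ⊢
      have h1 : r i < a i - y := by linarith
      calc r i < a i - y := h1
        _ ≤ |a i - y| := le_abs_self _
        _ = |y - a i| := abs_sub_comm _ _
    · rw [qPlus] at h
      have := kth_lt_count' (fun i => a i + r i) y h
      refine le_trans this (Finset.card_le_card ?_)
      intro i hi
      simp only [Finset.mem_filter, Finset.mem_univ, true_and] at hi ⊢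
      have h1 : r i < y - a i := by linarith
      calc r i < y - a i := h1
        _ ≤ |y - a i| := le_abs_self _
  calc (1 - α) * ((n : ℝ) + 1) ≤ (k : ℝ) := Nat.le_ceil _
    _ ≤ _ := by exact_mod_cast hmain


end
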